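/- Let S be a standard symmetric random walk and τ a stopping time such that the family {S_{τ∧t} : t ∈ ℕ} is uniformly integrable. Then for every t ∈ ℕ and every x ∈ ℝ, U_{S_τ}(x) ≥ U_{S_{τ∧t}}(x) ≥ |x|, where U_Z(x) := E|x − Z|; moreover U_{S_{τ∧t}}(x) = |x| for all x ∉ (−t, t). -/

import Mathlib

open MeasureTheory ProbabilityTheory Filter Topology

/-- For a stopping time τ of the simple symmetric random walk S with `{S_{τ∧t}}` uniformly
integrable: `U_{S_τ}(x) ≥ U_{S_{τ∧t}}(x) ≥ |x|`, and `U_{S_{τ∧t}}(x) = |x|` outside `(-t,t)`. -/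
theorem stmt5 {Ω : Type*} {m0 : MeasurableSpace Ω} (P : Measure Ω) [IsProbabilityMeasure P]
    (F : Filtration ℕ m0)
    (X : ℕ → Ω → ℤ)
    (hmeas : ∀ i, Measurable (X i))
    (hadapted : ∀ i, Measurable[F (i + 1)] (X i))
    (hindep : iIndepFun X P)
    (hindepF : ∀ i, Indep (MeasurableSpace.comap (X i) inferInstance) (F i) P)
    (hdist : ∀ i, P (X i ⁻¹' {1}) = 1/2 ∧ P (X i ⁻¹' {-1}) = 1/2)
    (S : ℕ → Ω → ℤ) (hS : ∀ t ω, S t ω = ∑ i ∈ Finset.range t, X i ω)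
    (τ : Ω → ℕ) (hτ : IsStoppingTime F (fun ω => (τ ω : WithTop ℕ)))
    (hUI : UniformIntegrable (fun t ω => ((S (min (τ ω) t) ω : ℤ) : ℝ)) 1 P) :
    ∀ t : ℕ, ∀ x : ℝ,
      ((∫ ω, |x - (S (min (τ ω) t) ω : ℝ)| ∂P ≤ ∫ ω, |x - (S (τ ω) ω : ℝ)| ∂P) ∧
        |x| ≤ ∫ ω, |x - (S (min (τ ω) t) ω : ℝ)| ∂P) ∧
      ((x ≤ -(t : ℝ) ∨ (t : ℝ) ≤ x) → ∫ ω, |x - (S (min (τ ω) t) ω : ℝ)| ∂P = |x|) := by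
  -- measurability of τ
  have hτm : Measurable τ := by
    apply measurable_to_countable
    intro y
    have hset : {ω | (τ ω : WithTop ℕ) = ((τ y : ℕ) : WithTop ℕ)} = τ ⁻¹' {τ y} := by
      ext ω; simp
    rw [← hset]
    exact F.le (τ y) _ (hτ.measurableSet_eq (τ y))
  -- F-measurability of S n
  have hSmm : ∀ n, Measurable[F n] (S n) := by
    intro n
    have : Measurable[F n] fun ω => ∑ i ∈ Finset.range n, X i ω := by
      apply Finset.measurable_sum
      intro i hi
      have hle : F (i + 1) ≤ F n := F.mono (by
        simp only [Finset.mem_range] at hi; omega)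
      exact (hadapted i).mono hle le_rfl
    have heq : S n = fun ω => ∑ i ∈ Finset.range n, X i ω := funext fun ω => hS n ω
    rw [heq]; exact this
  have hSm : ∀ n, Measurable (S n) := fun n => (hSmm n).mono (F.le n) le_rfl
  have hcastm : ∀ n, Measurable[F n] fun ω => ((S n ω : ℤ) : ℝ) := fun n =>
    (measurable_from_top (f := fun z : ℤ => (z : ℝ))).comp (hSmm n)
  -- the stopped process identity
  have hstop_eq : ∀ (n : ℕ) (ω : Ω),
      S (min (τ ω) n) ω = ∑ i ∈ Finset.range n, if i < τ ω then X i ω else 0 := by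
    intro n ω
    rw [hS]
    rw [← Finset.sum_filter]
    congr 1
    ext i
    simp only [Finset.mem_filter, Finset.mem_range, lt_min_iff]
    tauto
  -- measurability of the stopped process
  have hfm : ∀ n, Measurable fun ω => ((S (min (τ ω) n) ω : ℤ) : ℝ) := by
    intro n
    have : Measurable fun ω => S (min (τ ω) n) ω := by
      have heq : (fun ω => S (min (τ ω) n) ω)
          = fun ω => ∑ i ∈ Finset.range n, if i < τ ω then X i ω else 0 :=
        funext fun ω => hstop_eq n ω
      rw [heq]
      apply Finset.measurable_sum
      intro i _
      exact Measurable.ite (hτm measurableSet_Ioi) (hmeas i) measurable_const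
    exact (measurable_from_top (f := fun z : ℤ => (z : ℝ))).comp this
  -- measurability of S_τ
  have hgm : Measurable fun ω => ((S (τ ω) ω : ℤ) : ℝ) := by
    have h1 : Measurable fun p : Ω × ℕ => ((S p.2 p.1 : ℤ) : ℝ) := by
      apply measurable_from_prod_countable_left
      intro n
      exact (measurable_from_top (f := fun z : ℤ => (z : ℝ))).comp (hSm n)
    exact h1.comp (measurable_id.prodMk hτm)
  -- a.e. the steps are ±1
  have hXpm : ∀ᵐ ω ∂P, ∀ n, X n ω = 1 ∨ X n ω = -1 := by
    rw [ae_all_iff]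
    intro n
    have hAB : P (X n ⁻¹' {1} ∪ X n ⁻¹' {-1}) = 1 := by
      rw [measure_union _ ((hmeas n) (measurableSet_singleton _))]
      · rw [(hdist n).1, (hdist n).2]
        exact ENNReal.add_halves 1
      · rw [Set.disjoint_left]
        intro a ha hb
        simp only [Set.mem_preimage, Set.mem_singleton_iff] at ha hb
        omega
    have : P ((X n ⁻¹' {1} ∪ X n ⁻¹' {-1})ᶜ) = 0 := by
      rw [measure_compl (((hmeas n) (measurableSet_singleton _)).union
        ((hmeas n) (measurableSet_singleton _))) (measure_ne_top P _), hAB,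
        measure_univ, tsub_self]
    have heq : {a | ¬(X n a = 1 ∨ X n a = -1)} = (X n ⁻¹' {1} ∪ X n ⁻¹' {-1})ᶜ := by
      ext ω; simp [not_or]
    rw [ae_iff, heq]
    exact this
  -- a.e. bound on |S n|
  have habs : ∀ᵐ ω ∂P, ∀ n, |((S n ω : ℤ) : ℝ)| ≤ n := by
    filter_upwards [hXpm] with ω hω
    intro n
    induction n with
    | zero => simp [hS 0 ω]
    | succ k ih =>
      have hk : S (k + 1) ω = S k ω + X k ω := by
        rw [hS (k + 1) ω, hS k ω, Finset.sum_range_succ]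
      have hx : |((X k ω : ℤ) : ℝ)| = 1 := by
        rcases hω k with h | h <;> rw [h] <;> norm_num
      calc |((S (k+1) ω : ℤ) : ℝ)| = |((S k ω : ℤ) : ℝ) + ((X k ω : ℤ) : ℝ)| := by
            rw [hk]; push_cast; ring_nf
        _ ≤ |((S k ω : ℤ) : ℝ)| + |((X k ω : ℤ) : ℝ)| := abs_add_le _ _
        _ ≤ ((k + 1 : ℕ) : ℝ) := by rw [hx]; push_cast; linarith
      -- done
  -- a.e. bound on the stopped process
  have hfbd : ∀ n : ℕ, ∀ᵐ ω ∂P, |((S (min (τ ω) n) ω : ℤ) : ℝ)| ≤ n := by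
    intro n
    filter_upwards [habs] with ω hω
    calc |((S (min (τ ω) n) ω : ℤ) : ℝ)| ≤ (min (τ ω) n : ℕ) := hω _
      _ ≤ n := by exact_mod_cast Nat.cast_le.2 (min_le_right _ _)
  -- integrability of the stopped process
  have hfint : ∀ n : ℕ, Integrable (fun ω => ((S (min (τ ω) n) ω : ℤ) : ℝ)) P := by
    intro n
    refine Integrable.mono' (integrable_const (n : ℝ)) (hfm n).aestronglyMeasurable ?_
    filter_upwards [hfbd n] with ω hω
    simpa [Real.norm_eq_abs] using hω
  -- key independence computation
  have hkey : ∀ (n : ℕ) (c : ℤ) (G : Ω → ℝ), Measurable[F n] G → Integrable G P →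
      ∫ ω, G ω * Set.indicator (X n ⁻¹' {c}) (fun _ => (1 : ℝ)) ω ∂P
        = (∫ ω, G ω ∂P) * (P (X n ⁻¹' {c})).toReal := by
    intro n c G hGm hGi
    have hIndep : IndepFun G (X n) P :=
      indep_of_indep_of_le_left (hindepF n).symm hGm.comap_le
    have hI2 : IndepFun G (fun ω => Set.indicator (X n ⁻¹' {c}) (fun _ => (1 : ℝ)) ω) P := by
      have h0 := @IndepFun.comp Ω ℝ ℤ ℝ ℝ m0 P G (X n) Real.measurableSpace
        Int.instMeasurableSpace Real.measurableSpace Real.measurableSpace id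
        (fun z : ℤ => Set.indicator ({c} : Set ℤ) (fun _ => (1:ℝ)) z) hIndep measurable_id
        ((measurable_const (a := (1:ℝ))).indicator (measurableSet_singleton c))
      have heq : ((fun z : ℤ => Set.indicator ({c} : Set ℤ) (fun _ => (1:ℝ)) z) ∘ (X n))
          = fun ω => Set.indicator (X n ⁻¹' {c}) (fun _ => (1 : ℝ)) ω := by
        funext ω
        by_cases h : X n ω = c <;> simp [Set.indicator_apply, h]
      have heq2 : (id : ℝ → ℝ) ∘ G = G := rfl
      rwa [heq, heq2] at h0
    rw [(show IndepFun G (fun ω => Set.indicator (X n ⁻¹' {c}) (fun _ => (1 : ℝ)) ω) P from hI2).integral_fun_mul_eq_mul_integral (hGm.mono (F.le n) le_rfl).aestronglyMeasurable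
      ((measurable_const (a := (1:ℝ))).indicator ((hmeas n) (measurableSet_singleton c))).aestronglyMeasurable]
    have hone : ∫ ω, Set.indicator (X n ⁻¹' {c}) (fun _ => (1:ℝ)) ω ∂P = (P (X n ⁻¹' {c})).toReal :=
      integral_indicator_one ((hmeas n) (measurableSet_singleton c))
    rw [hone]
  -- splitting lemma
  have hsplit : ∀ (n : ℕ) (G₁ G₂ : Ω → ℝ), Measurable[F n] G₁ → Measurable[F n] G₂ →
      Integrable G₁ P → Integrable G₂ P →
      ∫ ω, (G₁ ω * Set.indicator (X n ⁻¹' {1}) (fun _ => (1:ℝ)) ω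
          + G₂ ω * Set.indicator (X n ⁻¹' {-1}) (fun _ => (1:ℝ)) ω) ∂P
        = ((∫ ω, G₁ ω ∂P) + ∫ ω, G₂ ω ∂P) / 2 := by
    intro n G₁ G₂ hm1 hm2 hi1 hi2
    have hint : ∀ (c : ℤ) (G : Ω → ℝ), Integrable G P →
        Integrable (fun ω => G ω * Set.indicator (X n ⁻¹' {c}) (fun _ => (1:ℝ)) ω) P := by
      intro c G hG
      have := hG.bdd_mul
        ((measurable_const (a := (1:ℝ))).indicator ((hmeas n) (measurableSet_singleton c))).aestronglyMeasurable
        (c := 1) (ae_of_all _ fun ω => by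
          by_cases h : ω ∈ X n ⁻¹' {c} <;>
            simp [Set.indicator_apply, h, Real.norm_eq_abs])
      simpa [mul_comm] using this
    rw [integral_add (hint 1 G₁ hi1) (hint (-1) G₂ hi2), hkey n 1 G₁ hm1 hi1,
      hkey n (-1) G₂ hm2 hi2, (hdist n).1, (hdist n).2]
    rw [ENNReal.toReal_div]
    norm_num
    ring
  -- expectation of the stopped process is 0
  have hE0 : ∀ n : ℕ, ∫ ω, ((S (min (τ ω) n) ω : ℤ) : ℝ) ∂P = 0 := by
    intro n
    induction n with
    | zero =>
      have : ∀ ω, ((S (min (τ ω) 0) ω : ℤ) : ℝ) = 0 := by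
        intro ω; simp [hS]
      rw [integral_congr_ae (ae_of_all _ this)]
      simp
    | succ k ih =>
      have hAk : MeasurableSet[F k] {ω | k < τ ω} := by
        have : {ω | k < τ ω} = {ω | (τ ω : WithTop ℕ) ≤ k}ᶜ := by ext ω; simp [not_le]
        rw [this]; exact (hτ k).compl
      set G₁ : Ω → ℝ := Set.indicator {ω | k < τ ω} (fun _ => (1:ℝ)) with hG₁
      set G₂ : Ω → ℝ := Set.indicator {ω | k < τ ω} (fun _ => (-1:ℝ)) with hG₂
      have hm1 : Measurable[F k] G₁ := (measurable_const (a := (1:ℝ))).indicator hAk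
      have hm2 : Measurable[F k] G₂ := (measurable_const (a := (-1:ℝ))).indicator hAk
      have hi1 : Integrable G₁ P := by
        refine Integrable.mono' (integrable_const (1:ℝ))
          (hm1.mono (F.le k) le_rfl).aestronglyMeasurable (ae_of_all _ fun ω => ?_)
        by_cases h : k < τ ω <;> simp [hG₁, Set.indicator_apply, h, Real.norm_eq_abs]
      have hi2 : Integrable G₂ P := by
        refine Integrable.mono' (integrable_const (1:ℝ))
          (hm2.mono (F.le k) le_rfl).aestronglyMeasurable (ae_of_all _ fun ω => ?_)
        by_cases h : k < τ ω <;> simp [hG₂, Set.indicator_apply, h, Real.norm_eq_abs]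
      have hdecomp : ∀ᵐ ω ∂P, ((S (min (τ ω) (k+1)) ω : ℤ) : ℝ)
          = ((S (min (τ ω) k) ω : ℤ) : ℝ)
            + (G₁ ω * Set.indicator (X k ⁻¹' {1}) (fun _ => (1:ℝ)) ω
              + G₂ ω * Set.indicator (X k ⁻¹' {-1}) (fun _ => (1:ℝ)) ω) := by
        filter_upwards [hXpm] with ω hω
        rcases le_or_gt (τ ω) k with h | h
        · have h1 : min (τ ω) (k+1) = τ ω := min_eq_left (by omega)
          have h2 : min (τ ω) k = τ ω := min_eq_left h
          have hni : ω ∉ {ω | k < τ ω} := by simp [not_lt.2 h]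
          rw [h1, h2, hG₁, hG₂, Set.indicator_of_notMem hni, Set.indicator_of_notMem hni]
          ring
        · have h1 : min (τ ω) (k+1) = k+1 := min_eq_right (by omega)
          have h2 : min (τ ω) k = k := min_eq_right (by omega)
          have hmem : ω ∈ {ω | k < τ ω} := h
          have hSk : S (k+1) ω = S k ω + X k ω := by
            rw [hS (k+1) ω, hS k ω, Finset.sum_range_succ]
          rw [h1, h2, hSk, hG₁, hG₂, Set.indicator_of_mem hmem, Set.indicator_of_mem hmem]
          rcases hω k with hx | hx
          · have e1 : ω ∈ X k ⁻¹' {1} := by simp [hx]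
            have e2 : ω ∉ X k ⁻¹' {-1} := by simp [hx]
            rw [Set.indicator_of_mem e1, Set.indicator_of_notMem e2]
            push_cast [hx]; ring
          · have e1 : ω ∉ X k ⁻¹' {1} := by simp [hx]
            have e2 : ω ∈ X k ⁻¹' {-1} := by simp [hx]
            rw [Set.indicator_of_notMem e1, Set.indicator_of_mem e2]
            push_cast [hx]; ring
      rw [integral_congr_ae hdecomp]
      have hintmul : ∀ (c : ℤ) (G : Ω → ℝ), Integrable G P →
          Integrable (fun ω => G ω * Set.indicator (X k ⁻¹' {c}) (fun _ => (1:ℝ)) ω) P := by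
        intro c G hG
        have := hG.bdd_mul
          ((measurable_const (a := (1:ℝ))).indicator ((hmeas k) (measurableSet_singleton c))).aestronglyMeasurable
          (c := 1) (ae_of_all _ fun ω => by
            by_cases h : ω ∈ X k ⁻¹' {c} <;>
              simp [Set.indicator_apply, h, Real.norm_eq_abs])
        simpa [mul_comm] using this
      have hsum : Integrable (fun ω => G₁ ω * Set.indicator (X k ⁻¹' {1}) (fun _ => (1:ℝ)) ω
          + G₂ ω * Set.indicator (X k ⁻¹' {-1}) (fun _ => (1:ℝ)) ω) P :=
        (hintmul 1 G₁ hi1).add (hintmul (-1) G₂ hi2)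
      rw [integral_add (hfint k) hsum, ih, hsplit k G₁ G₂ hm1 hm2 hi1 hi2]
      have hmeasA : MeasurableSet {ω | k < τ ω} := F.le k _ hAk
      rw [hG₁, hG₂, integral_indicator_const (1:ℝ) hmeasA, integral_indicator_const (-1:ℝ) hmeasA]
      simp
  -- pointwise convergence
  have hgae : ∀ ω, Tendsto (fun n => ((S (min (τ ω) n) ω : ℤ) : ℝ)) atTop
      (𝓝 ((S (τ ω) ω : ℤ) : ℝ)) := by
    intro ω
    apply tendsto_atTop_of_eventually_const (i₀ := τ ω)
    intro n hn
    rw [min_eq_left hn]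
  -- integrability of the limit
  obtain ⟨C, hC⟩ := hUI.2.2
  have hgle : eLpNorm (fun ω => ((S (τ ω) ω : ℤ) : ℝ)) 1 P ≤ C := by
    refine le_trans (Lp.eLpNorm_lim_le_liminf_eLpNorm (fun n => (hfm n).aestronglyMeasurable)
      _ (ae_of_all _ hgae)) ?_
    exact Filter.liminf_le_of_frequently_le (Filter.Frequently.of_forall hC)
  have hgmem : MemLp (fun ω => ((S (τ ω) ω : ℤ) : ℝ)) 1 P :=
    ⟨hgm.aestronglyMeasurable, lt_of_le_of_lt hgle ENNReal.coe_lt_top⟩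
  have hgint : Integrable (fun ω => ((S (τ ω) ω : ℤ) : ℝ)) P :=
    memLp_one_iff_integrable.mp hgmem
  -- Vitali / L1 convergence
  have hL1 : Tendsto (fun n => eLpNorm ((fun ω => ((S (min (τ ω) n) ω : ℤ) : ℝ))
      - fun ω => ((S (τ ω) ω : ℤ) : ℝ)) 1 P) atTop (𝓝 0) :=
    tendsto_Lp_finite_of_tendstoInMeasure le_rfl ENNReal.one_ne_top hUI.1 hgmem hUI.2.1
      (tendstoInMeasure_of_tendsto_ae hUI.1 (ae_of_all _ hgae))
  intro t x
  have hint_abs : ∀ n : ℕ, Integrable (fun ω => |x - ((S (min (τ ω) n) ω : ℤ) : ℝ)|) P :=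
    fun n => ((integrable_const x).sub (hfint n)).abs
  -- convergence of the U-functionals
  have hconv : Tendsto (fun n => ∫ ω, |x - ((S (min (τ ω) n) ω : ℤ) : ℝ)| ∂P) atTop
      (𝓝 (∫ ω, |x - ((S (τ ω) ω : ℤ) : ℝ)| ∂P)) := by
    apply tendsto_integral_of_L1 (fun ω => |x - ((S (τ ω) ω : ℤ) : ℝ)|)
      ((integrable_const x).sub hgint).abs.aestronglyMeasurable
      (Filter.Eventually.of_forall fun n => hint_abs n)
    apply tendsto_of_tendsto_of_tendsto_of_le_of_le tendsto_const_nhds hL1 (fun n => zero_le)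
    intro n
    simp only [eLpNorm_one_eq_lintegral_enorm]
    refine lintegral_mono fun ω => ?_
    simp only [Pi.sub_apply]
    rw [← ofReal_norm, ← ofReal_norm]; refine ENNReal.ofReal_le_ofReal ?_
    have h1 : ‖|x - ((S (min (τ ω) n) ω : ℤ) : ℝ)| - |x - ((S (τ ω) ω : ℤ) : ℝ)|‖
        ≤ ‖((S (min (τ ω) n) ω : ℤ) : ℝ) - ((S (τ ω) ω : ℤ) : ℝ)‖ := by
      rw [Real.norm_eq_abs, Real.norm_eq_abs]
      calc |(|x - ((S (min (τ ω) n) ω : ℤ) : ℝ)| - |x - ((S (τ ω) ω : ℤ) : ℝ)|)|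
          ≤ |(x - ((S (min (τ ω) n) ω : ℤ) : ℝ)) - (x - ((S (τ ω) ω : ℤ) : ℝ))| :=
            abs_abs_sub_abs_le_abs_sub _ _
        _ = |((S (min (τ ω) n) ω : ℤ) : ℝ) - ((S (τ ω) ω : ℤ) : ℝ)| := by
            rw [abs_sub_comm]; ring_nf
    rw [← coe_nnnorm, ← coe_nnnorm] at h1
    exact_mod_cast h1
  -- part 2 : |x| ≤ U_{S_{τ∧n}}(x)
  have hpart2 : ∀ n : ℕ, |x| ≤ ∫ ω, |x - ((S (min (τ ω) n) ω : ℤ) : ℝ)| ∂P := by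
    intro n
    have h1 : ∫ ω, (x - ((S (min (τ ω) n) ω : ℤ) : ℝ)) ∂P = x := by
      rw [integral_sub (integrable_const x) (hfint n), hE0 n, integral_const]
      simp
    calc |x| = |∫ ω, (x - ((S (min (τ ω) n) ω : ℤ) : ℝ)) ∂P| := by rw [h1]
      _ ≤ ∫ ω, |x - ((S (min (τ ω) n) ω : ℤ) : ℝ)| ∂P := by
          simpa [Real.norm_eq_abs] using
            norm_integral_le_integral_norm (μ := P) (fun ω => x - ((S (min (τ ω) n) ω : ℤ) : ℝ))
  -- monotonicity in n
  have hmono : ∀ n : ℕ, (∫ ω, |x - ((S (min (τ ω) n) ω : ℤ) : ℝ)| ∂P)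
      ≤ ∫ ω, |x - ((S (min (τ ω) (n+1)) ω : ℤ) : ℝ)| ∂P := by
    intro n
    have hAk : MeasurableSet[F n] {ω | n < τ ω} := by
      have : {ω | n < τ ω} = {ω | (τ ω : WithTop ℕ) ≤ n}ᶜ := by ext ω; simp [not_le]
      rw [this]; exact (hτ n).compl
    have hmeasA : MeasurableSet {ω | n < τ ω} := F.le n _ hAk
    set D : ℝ → Ω → ℝ := fun c => Set.indicator {ω | n < τ ω}
      (fun ω => |x - ((S n ω : ℤ) : ℝ) - c| - |x - ((S n ω : ℤ) : ℝ)|) with hD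
    have hDm : ∀ c : ℝ, Measurable[F n] (D c) := by
      intro c
      have hφ : Continuous fun y : ℝ => |x - y - c| - |x - y| :=
        (((continuous_const.sub continuous_id).sub continuous_const).abs).sub
          ((continuous_const.sub continuous_id).abs)
      exact (hφ.measurable.comp (hcastm n)).indicator hAk
    have hDi : ∀ c : ℝ, Integrable (D c) P := by
      intro c
      refine Integrable.mono' (integrable_const |c|)
        ((hDm c).mono (F.le n) le_rfl).aestronglyMeasurable (ae_of_all _ fun ω => ?_)
      by_cases h : ω ∈ {ω | n < τ ω}
      · simp only [hD]
        rw [Set.indicator_of_mem h, Real.norm_eq_abs]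
        calc |(|x - ((S n ω : ℤ) : ℝ) - c| - |x - ((S n ω : ℤ) : ℝ)|)|
            ≤ |(x - ((S n ω : ℤ) : ℝ) - c) - (x - ((S n ω : ℤ) : ℝ))| :=
              abs_abs_sub_abs_le_abs_sub _ _
          _ = |c| := by rw [show (x - ((S n ω : ℤ) : ℝ) - c) - (x - ((S n ω : ℤ) : ℝ)) = -c by
                ring, abs_neg]
      · simp only [hD]
        rw [Set.indicator_of_notMem h]
        simp
    have hdec : ∀ᵐ ω ∂P, |x - ((S (min (τ ω) (n+1)) ω : ℤ) : ℝ)|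
        = |x - ((S (min (τ ω) n) ω : ℤ) : ℝ)|
          + (D 1 ω * Set.indicator (X n ⁻¹' {1}) (fun _ => (1:ℝ)) ω
            + D (-1) ω * Set.indicator (X n ⁻¹' {-1}) (fun _ => (1:ℝ)) ω) := by
      filter_upwards [hXpm] with ω hω
      rcases le_or_gt (τ ω) n with h | h
      · have h1 : min (τ ω) (n+1) = τ ω := min_eq_left (by omega)
        have h2 : min (τ ω) n = τ ω := min_eq_left h
        have hni : ω ∉ {ω | n < τ ω} := by simp [not_lt.2 h]
        rw [h1, h2]
        simp only [hD]
        rw [Set.indicator_of_notMem hni, Set.indicator_of_notMem hni]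
        ring
      · have h1 : min (τ ω) (n+1) = n+1 := min_eq_right h
        have h2 : min (τ ω) n = n := min_eq_right h.le
        have hmem : ω ∈ {ω | n < τ ω} := h
        have hSk : S (n+1) ω = S n ω + X n ω := by
          rw [hS (n+1) ω, hS n ω, Finset.sum_range_succ]
        rw [h1, h2, hSk]
        simp only [hD]
        rw [Set.indicator_of_mem hmem, Set.indicator_of_mem hmem]
        rcases hω n with hx | hx
        · have e1 : ω ∈ X n ⁻¹' {1} := by simp [hx]
          have e2 : ω ∉ X n ⁻¹' {-1} := by simp [hx]
          rw [Set.indicator_of_mem e1, Set.indicator_of_notMem e2]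
          push_cast [hx]
          rw [show x - (((S n ω : ℤ) : ℝ) + 1) = x - ((S n ω : ℤ) : ℝ) - 1 by ring]
          ring
        · have e1 : ω ∉ X n ⁻¹' {1} := by simp [hx]
          have e2 : ω ∈ X n ⁻¹' {-1} := by simp [hx]
          rw [Set.indicator_of_notMem e1, Set.indicator_of_mem e2]
          push_cast [hx]
          rw [show x - (((S n ω : ℤ) : ℝ) + (-1)) = x - ((S n ω : ℤ) : ℝ) - (-1) by ring]
          ring
    have hprod : ∀ (c : ℤ) (G : Ω → ℝ), Integrable G P →
        Integrable (fun ω => G ω * Set.indicator (X n ⁻¹' {c}) (fun _ => (1:ℝ)) ω) P := by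
      intro c G hG
      have := hG.bdd_mul
        ((measurable_const (a := (1:ℝ))).indicator
          ((hmeas n) (measurableSet_singleton c))).aestronglyMeasurable
        (c := 1) (ae_of_all _ fun ω => by
          by_cases h : ω ∈ X n ⁻¹' {c} <;>
            simp [Set.indicator_apply, h, Real.norm_eq_abs])
      simpa [mul_comm] using this
    have hsum : Integrable (fun ω => D 1 ω * Set.indicator (X n ⁻¹' {1}) (fun _ => (1:ℝ)) ω
        + D (-1) ω * Set.indicator (X n ⁻¹' {-1}) (fun _ => (1:ℝ)) ω) P :=
      (hprod 1 (D 1) (hDi 1)).add (hprod (-1) (D (-1)) (hDi (-1)))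
    rw [integral_congr_ae hdec, integral_add (hint_abs n) hsum,
      hsplit n (D 1) (D (-1)) (hDm 1) (hDm (-1)) (hDi 1) (hDi (-1))]
    have hnn : 0 ≤ ((∫ ω, D 1 ω ∂P) + ∫ ω, D (-1) ω ∂P) / 2 := by
      have : 0 ≤ (∫ ω, D 1 ω ∂P) + ∫ ω, D (-1) ω ∂P := by
        rw [← integral_add (hDi 1) (hDi (-1))]
        apply integral_nonneg
        intro ω
        rw [Pi.zero_apply]
        by_cases h : ω ∈ {ω | n < τ ω}
        · simp only [hD, Set.indicator_of_mem h]
          have h2 : |2 * (x - ((S n ω : ℤ) : ℝ))| = 2 * |x - ((S n ω : ℤ) : ℝ)| := by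
            rw [abs_mul]; norm_num
          have h3 := abs_add_le (x - ((S n ω : ℤ) : ℝ) - 1) (x - ((S n ω : ℤ) : ℝ) + 1)
          rw [show (x - ((S n ω : ℤ) : ℝ) - 1) + (x - ((S n ω : ℤ) : ℝ) + 1)
            = 2 * (x - ((S n ω : ℤ) : ℝ)) by ring, h2] at h3
          have h4 : x - ((S n ω : ℤ) : ℝ) - (-1) = x - ((S n ω : ℤ) : ℝ) + 1 := by ring
          rw [h4]
          linarith
        · simp only [hD, Set.indicator_of_notMem h]
          simp
      linarith
    linarith
  -- assemble
  have hMon : Monotone fun n => ∫ ω, |x - ((S (min (τ ω) n) ω : ℤ) : ℝ)| ∂P :=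
    monotone_nat_of_le_succ hmono
  refine ⟨⟨hMon.ge_of_tendsto hconv t, hpart2 t⟩, ?_⟩
  rintro (hx | hx)
  · -- x ≤ -t
    have hae3 : ∀ᵐ ω ∂P, |x - ((S (min (τ ω) t) ω : ℤ) : ℝ)|
        = -(x - ((S (min (τ ω) t) ω : ℤ) : ℝ)) := by
      filter_upwards [hfbd t] with ω hω
      have h1 : -((t : ℕ) : ℝ) ≤ ((S (min (τ ω) t) ω : ℤ) : ℝ) := by
        have := (abs_le.1 hω).1; linarith
      exact abs_of_nonpos (by linarith)
    rw [integral_congr_ae hae3, integral_neg,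
      integral_sub (integrable_const x) (hfint t), hE0 t, integral_const]
    have hx0 : x ≤ 0 := le_trans hx (neg_nonpos.2 (Nat.cast_nonneg t))
    rw [abs_of_nonpos hx0]
    simp
  · -- t ≤ x
    have hae3 : ∀ᵐ ω ∂P, |x - ((S (min (τ ω) t) ω : ℤ) : ℝ)|
        = x - ((S (min (τ ω) t) ω : ℤ) : ℝ) := by
      filter_upwards [hfbd t] with ω hω
      have h1 : ((S (min (τ ω) t) ω : ℤ) : ℝ) ≤ ((t : ℕ) : ℝ) := (abs_le.1 hω).2
      exact abs_of_nonneg (by linarith)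
    rw [integral_congr_ae hae3, integral_sub (integrable_const x) (hfint t), hE0 t,
      integral_const]
    have hx0 : 0 ≤ x := le_trans (by positivity) hx
    rw [abs_of_nonneg hx0]
    simp
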